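/- For all binary cubics p, q ∈ ℂ[x,y] (homogeneous of degree 3), the identity ⟨⟨p,q⟩_1, ⟨p,q⟩_1⟩_4 = 6·(⟨p,q⟩_3)^2 holds in ℂ, where ⟨p,q⟩_1 is a binary quartic and ⟨p,q⟩_3 is a constant. That is, the pairs (Ψ, G) = (⟨p,q⟩_1, ⟨p,q⟩_3) arising from lines of binary cubics satisfy the quadratic relation expressing that the invariant 𝓘 of the associated Gergonne conic vanishes. -/

import Mathlib

open MvPolynomial

/-- Partial derivative with respect to the first variable `x = X 0`. -/
noncomputable def dX : MvPolynomial (Fin 2) ℂ → MvPolynomial (Fin 2) ℂ :=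
  fun f => MvPolynomial.pderiv (0 : Fin 2) f

/-- Partial derivative with respect to the second variable `y = X 1`. -/
noncomputable def dY : MvPolynomial (Fin 2) ℂ → MvPolynomial (Fin 2) ℂ :=
  fun f => MvPolynomial.pderiv (1 : Fin 2) f

/-- The `k`-th transvectant
`⟨φ,ψ⟩_k = Σ_{j=0}^{k} (−1)^j (k choose j) (∂^k φ/∂x^{k−j}∂y^j)·(∂^k ψ/∂x^j ∂y^{k−j})`. -/
noncomputable def transvectant (k : ℕ) (φ ψ : MvPolynomial (Fin 2) ℂ) :
    MvPolynomial (Fin 2) ℂ :=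
  ∑ j ∈ Finset.range (k + 1),
    ((-1 : ℂ) ^ j * (k.choose j : ℂ)) •
      (dX^[k - j] (dY^[j] φ) * dX^[j] (dY^[k - j] ψ))

private lemma u_inj {a b c d : ℕ} :
    (Finsupp.single (0:Fin 2) a + Finsupp.single 1 b
      = Finsupp.single 0 c + Finsupp.single 1 d) ↔ (a = c ∧ b = d) := by
  constructor
  · intro h
    constructor
    · have := DFunLike.congr_fun h 0; simpa using this
    · have := DFunLike.congr_fun h 1; simpa using this
  · rintro ⟨rfl, rfl⟩; rfl

private lemma degree_fin2 (d : Fin 2 →₀ ℕ) : d.degree = d 0 + d 1 := by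
  rw [Finsupp.degree_apply]
  rw [Finset.sum_subset (Finset.subset_univ _) (by
    intro i _ h; simpa [Finsupp.notMem_support_iff] using h)]
  exact Fin.sum_univ_two d

private lemma fin2_eq (m : Fin 2 →₀ ℕ) :
    m = Finsupp.single 0 (m 0) + Finsupp.single 1 (m 1) := by
  ext i
  fin_cases i <;> simp [Finsupp.single_apply]

private lemma hXX (i j : ℕ) : (X 0 : MvPolynomial (Fin 2) ℂ) ^ i * X 1 ^ j
    = monomial (Finsupp.single 0 i + Finsupp.single 1 j) 1 := by
  rw [X_pow_eq_monomial, X_pow_eq_monomial, monomial_mul, one_mul]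

private lemma rep3 (f : MvPolynomial (Fin 2) ℂ) (hf : f.IsHomogeneous 3) :
    f = C (coeff (Finsupp.single 0 3 + Finsupp.single 1 0) f) * X 0 ^ 3 * X 1 ^ 0
      + C (coeff (Finsupp.single 0 2 + Finsupp.single 1 1) f) * X 0 ^ 2 * X 1 ^ 1
      + C (coeff (Finsupp.single 0 1 + Finsupp.single 1 2) f) * X 0 ^ 1 * X 1 ^ 2
      + C (coeff (Finsupp.single 0 0 + Finsupp.single 1 3) f) * X 0 ^ 0 * X 1 ^ 3 := by
  have hconv : ∀ (a : ℂ) (i j : ℕ), C a * (X 0 : MvPolynomial (Fin 2) ℂ) ^ i * X 1 ^ j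
      = monomial (Finsupp.single 0 i + Finsupp.single 1 j) a := by
    intro a i j
    rw [mul_assoc, hXX, C_mul_monomial, mul_one]
  rw [hconv, hconv, hconv, hconv]
  ext m
  by_cases h : m.degree = 3
  · have hm01 : m 0 + m 1 = 3 := by rw [← degree_fin2]; exact h
    obtain ⟨n0, n1, rfl, hsum⟩ : ∃ n0 n1, m = Finsupp.single 0 n0 + Finsupp.single 1 n1
        ∧ n0 + n1 = 3 := ⟨m 0, m 1, fin2_eq m, hm01⟩
    have h0 : n0 ≤ 3 := by omega
    have h1 : n1 ≤ 3 := by omega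
    simp only [coeff_add, coeff_monomial]
    interval_cases n0 <;> interval_cases n1 <;>
      first
      | omega
      | simp [Finsupp.ext_iff, Fin.forall_fin_two, Finsupp.single_apply]
  · have hz : coeff m f = 0 := hf.coeff_eq_zero h
    have hne : ∀ a b : ℕ, a + b = 3 →
        (Finsupp.single (0:Fin 2) a + Finsupp.single 1 b) ≠ m := by
      rintro a b hab rfl
      apply h
      rw [degree_fin2]
      simp [Finsupp.single_apply, hab]
    simp only [coeff_add, coeff_monomial, hz]
    rw [if_neg (hne 3 0 rfl), if_neg (hne 2 1 rfl), if_neg (hne 1 2 rfl),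
      if_neg (hne 0 3 rfl)]
    simp


private lemma pderiv_natCast' {i : Fin 2} {n : ℕ} :
    pderiv i ((n : MvPolynomial (Fin 2) ℂ)) = 0 := by
  rw [← map_natCast (C : ℂ →+* MvPolynomial (Fin 2) ℂ), pderiv_C]

private lemma pderiv_ofNat' {i : Fin 2} {n : ℕ} [n.AtLeastTwo] :
    pderiv i (OfNat.ofNat n : MvPolynomial (Fin 2) ℂ) = 0 := by
  rw [← map_ofNat (C : ℂ →+* MvPolynomial (Fin 2) ℂ), pderiv_C]

private lemma T1 (a0 a1 a2 a3 b0 b1 b2 b3 : ℂ) :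
    transvectant 1 (C a0 * X 0 ^ 3 * X 1 ^ 0 + C a1 * X 0 ^ 2 * X 1 ^ 1
      + C a2 * X 0 ^ 1 * X 1 ^ 2 + C a3 * X 0 ^ 0 * X 1 ^ 3)
      (C b0 * X 0 ^ 3 * X 1 ^ 0 + C b1 * X 0 ^ 2 * X 1 ^ 1
      + C b2 * X 0 ^ 1 * X 1 ^ 2 + C b3 * X 0 ^ 0 * X 1 ^ 3)
    = C (-3*a1*b0 + 3*a0*b1) * X 0 ^ 4 * X 1 ^ 0
      + C (-6*a2*b0 + 6*a0*b2) * X 0 ^ 3 * X 1 ^ 1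
      + C (-9*a3*b0 - 3*a2*b1 + 3*a1*b2 + 9*a0*b3) * X 0 ^ 2 * X 1 ^ 2
      + C (-6*a3*b1 + 6*a1*b3) * X 0 ^ 1 * X 1 ^ 3
      + C (-3*a3*b2 + 3*a2*b3) * X 0 ^ 0 * X 1 ^ 4 := by
  simp only [Nat.reduceSub, Nat.reduceAdd, transvectant, dX, dY, Finset.sum_range_succ, Finset.sum_range_zero, zero_add,
    Function.iterate_succ, Function.iterate_zero, Function.comp_apply, id_eq,
    map_add, pderiv_C_mul, pderiv_mul, pderiv_pow, pderiv_X_self, pderiv_natCast', pderiv_one, pderiv_C, mul_zero, zero_mul, add_zero, zero_add, mul_one,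
    pderiv_X_of_ne (show (1:Fin 2) ≠ 0 by decide),
    pderiv_X_of_ne (show (0:Fin 2) ≠ 1 by decide),
    smul_eq_C_mul, map_mul, map_neg, map_sub, map_one, map_ofNat, map_natCast, map_pow]
  norm_num [Nat.choose]
  ring

set_option maxHeartbeats 2000000 in
private lemma T3 (a0 a1 a2 a3 b0 b1 b2 b3 : ℂ) :
    transvectant 3 (C a0 * X 0 ^ 3 * X 1 ^ 0 + C a1 * X 0 ^ 2 * X 1 ^ 1
      + C a2 * X 0 ^ 1 * X 1 ^ 2 + C a3 * X 0 ^ 0 * X 1 ^ 3)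
      (C b0 * X 0 ^ 3 * X 1 ^ 0 + C b1 * X 0 ^ 2 * X 1 ^ 1
      + C b2 * X 0 ^ 1 * X 1 ^ 2 + C b3 * X 0 ^ 0 * X 1 ^ 3)
    = C (-36*a3*b0 + 12*a2*b1 - 12*a1*b2 + 36*a0*b3) := by
  simp only [Nat.reduceSub, Nat.reduceAdd, transvectant, dX, dY, Finset.sum_range_succ, Finset.sum_range_zero, zero_add,
    Function.iterate_succ, Function.iterate_zero, Function.comp_apply, id_eq,
    map_add, pderiv_C_mul, pderiv_mul, pderiv_pow, pderiv_X_self, pderiv_natCast', pderiv_one, pderiv_C, mul_zero, zero_mul, add_zero, zero_add, mul_one,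
    pderiv_X_of_ne (show (1:Fin 2) ≠ 0 by decide),
    pderiv_X_of_ne (show (0:Fin 2) ≠ 1 by decide),
    smul_eq_C_mul, map_mul, map_neg, map_sub, map_one, map_ofNat, map_natCast, map_pow]
  norm_num [Nat.choose]
  ring

set_option maxHeartbeats 2000000 in
private lemma T4 (u0 u1 u2 u3 u4 v0 v1 v2 v3 v4 : ℂ) :
    transvectant 4 (C u0 * X 0 ^ 4 * X 1 ^ 0 + C u1 * X 0 ^ 3 * X 1 ^ 1 + C u2 * X 0 ^ 2 * X 1 ^ 2
      + C u3 * X 0 ^ 1 * X 1 ^ 3 + C u4 * X 0 ^ 0 * X 1 ^ 4)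
      (C v0 * X 0 ^ 4 * X 1 ^ 0 + C v1 * X 0 ^ 3 * X 1 ^ 1 + C v2 * X 0 ^ 2 * X 1 ^ 2
      + C v3 * X 0 ^ 1 * X 1 ^ 3 + C v4 * X 0 ^ 0 * X 1 ^ 4)
    = C (576*u4*v0 - 144*u3*v1 + 96*u2*v2 - 144*u1*v3 + 576*u0*v4) := by
  simp only [Nat.reduceSub, Nat.reduceAdd, transvectant, dX, dY, Finset.sum_range_succ, Finset.sum_range_zero, zero_add,
    Function.iterate_succ, Function.iterate_zero, Function.comp_apply, id_eq,
    map_add, pderiv_C_mul, pderiv_mul, pderiv_pow, pderiv_X_self, pderiv_natCast', pderiv_one, pderiv_C, mul_zero, zero_mul, add_zero, zero_add, mul_one,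
    pderiv_X_of_ne (show (1:Fin 2) ≠ 0 by decide),
    pderiv_X_of_ne (show (0:Fin 2) ≠ 1 by decide),
    smul_eq_C_mul, map_mul, map_neg, map_sub, map_one, map_ofNat, map_natCast, map_pow]
  norm_num [Nat.choose]
  ring

/-- For all binary cubics `p, q`, the identity `⟨⟨p,q⟩₁, ⟨p,q⟩₁⟩₄ = 6·(⟨p,q⟩₃)²` holds:
the pairs `(Ψ, G) = (⟨p,q⟩₁, ⟨p,q⟩₃)` arising from lines of binary cubics satisfy the
quadratic relation `𝓘 = 0` of the Gergonne conic. -/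
theorem gergonne_invariant_vanishes
    (p q : MvPolynomial (Fin 2) ℂ) (hp : p.IsHomogeneous 3) (hq : q.IsHomogeneous 3) :
    transvectant 4 (transvectant 1 p q) (transvectant 1 p q)
      = (6 : ℂ) • (transvectant 3 p q) ^ 2 := by
  rw [rep3 p hp, rep3 q hq, T1, T4, T3]
  rw [smul_eq_C_mul, ← map_pow, ← map_mul]
  exact congrArg C (by ring)
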